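/- arXiv:1403.0199 — 4 statements merged into one kernel-verified Lean document; each statement's English description precedes it below -/
import Mathlib

section
/- Let p > -1, a, γ > 0, d > 0 and λ ∈ ℝ. Suppose u ∈ C²(ℝ) is real-valued with u, u' ∈ L²(ℝ) and u(x)u'(x) → 0 as |x| → ∞, v ∈ L²(ℝ) ∩ L⁴(ℝ), the functions |u|^{p+2} and u²|v| are integrable, and the Euler–Lagrange system λu'' - λu = -uv - a|u|^p u, -2dλ v = -u² - γv³ holds pointwise on ℝ. Then 2λ(‖u‖_{L²}² + ‖u'‖_{L²}² + d‖v‖_{L²}²) = 3∫_ℝ u²v dx + 2a∫_ℝ |u|^{p+2} dx + γ∫_ℝ v⁴ dx. -/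
open MeasureTheory Filter

noncomputable section

/-- The continuous extension of `s ↦ |s|^p s` (equal to `0` at `s = 0`),
well defined for `p > -1`. -/
def singPow (p s : ℝ) : ℝ := if s = 0 then 0 else |s| ^ p * s

lemma singPow_mul_self {p : ℝ} (hp : -1 < p) (s : ℝ) : singPow p s * s = |s| ^ (p + 2) := by
  unfold singPow
  by_cases hs : s = 0
  · simp [hs, Real.zero_rpow (by linarith : p + 2 ≠ 0)]
  · simp only [hs, if_false]
    have habs : (0:ℝ) < |s| := abs_pos.mpr hs
    have : |s| ^ p * s * s = |s| ^ p * |s| ^ (2:ℝ) := by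
      rw [show |s| ^ (2:ℝ) = |s| ^ (2:ℕ) by rw [← Real.rpow_natCast]; norm_num]
      rw [sq_abs]; ring
    rw [this, ← Real.rpow_add habs]

/-- multiplying the Euler–Lagrange equations by `u` and `v`
respectively and integrating by parts gives
`2λ(‖u‖₂² + ‖u'‖₂² + d‖v‖₂²) = 3∫u²v + 2a∫|u|^{p+2} + γ∫v⁴`. -/
theorem euler_lagrange_identity (p a γ d lam : ℝ) (hp : -1 < p) (ha : 0 < a) (hγ : 0 < γ)
    (hd : 0 < d) (u v : ℝ → ℝ)
    (hu : ContDiff ℝ 2 u)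
    (huL2 : MemLp u 2) (hu'L2 : MemLp (deriv u) 2)
    (hdecay : Tendsto (fun x => u x * deriv u x) (cocompact ℝ) (nhds 0))
    (hvL2 : MemLp v 2) (hvL4 : MemLp v 4)
    (hup : Integrable (fun x => |u x| ^ (p + 2)))
    (huv : Integrable (fun x => (u x) ^ 2 * |v x|))
    (heq1 : ∀ x, lam * deriv (deriv u) x - lam * u x = -(u x * v x) - a * singPow p (u x))
    (heq2 : ∀ x, -2 * d * lam * v x = -(u x) ^ 2 - γ * (v x) ^ 3) :
    2 * lam * ((∫ x : ℝ, (u x) ^ 2) + (∫ x : ℝ, (deriv u x) ^ 2) + d * ∫ x : ℝ, (v x) ^ 2)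
      = 3 * (∫ x : ℝ, (u x) ^ 2 * v x) + 2 * a * (∫ x : ℝ, |u x| ^ (p + 2))
        + γ * ∫ x : ℝ, (v x) ^ 4 := by
  -- basic regularity facts
  have hud : Differentiable ℝ u := hu.differentiable (by norm_num)
  have hu' : ContDiff ℝ 1 (deriv u) := by
    rw [show (2 : WithTop ℕ∞) = 1 + 1 from rfl] at hu
    exact (contDiff_succ_iff_deriv.mp hu).2.2
  have hu'd : Differentiable ℝ (deriv u) := hu'.differentiable one_ne_zero
  have hu''c : Continuous (deriv (deriv u)) := hu'.continuous_deriv le_rfl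
  -- integrability facts
  have hIu2 : Integrable (fun x => (u x) ^ 2) := huL2.integrable_sq
  have hIu'2 : Integrable (fun x => (deriv u x) ^ 2) := hu'L2.integrable_sq
  have hIv2 : Integrable (fun x => (v x) ^ 2) := hvL2.integrable_sq
  have hIv4 : Integrable (fun x => (v x) ^ 4) := by
    have h := hvL4.integrable_norm_rpow (by norm_num) (by norm_num)
    refine h.congr (Filter.Eventually.of_forall fun x => ?_)
    show ‖v x‖ ^ ((4:ENNReal)).toReal = v x ^ 4
    have h4 : ((4:ENNReal)).toReal = (4:ℝ) := by norm_num
    rw [h4, Real.norm_eq_abs, show (4:ℝ) = ((4:ℕ):ℝ) by norm_num, Real.rpow_natCast,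
      ← abs_pow, abs_of_nonneg (by positivity)]
  have hIuv : Integrable (fun x => (u x) ^ 2 * v x) := by
    refine huv.mono' ?_ (Filter.Eventually.of_forall fun x => ?_)
    · exact (((hud.continuous.pow 2).aestronglyMeasurable).mul hvL2.aestronglyMeasurable)
    · rw [Real.norm_eq_abs, abs_mul, abs_of_nonneg (by positivity)]
  -- key pointwise identity from heq1 multiplied by u
  have key1 : ∀ x, lam * (u x * deriv (deriv u) x)
      = lam * (u x) ^ 2 - (u x) ^ 2 * v x - a * |u x| ^ (p + 2) := by
    intro x
    have h2 := singPow_mul_self hp (u x)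
    linear_combination u x * heq1 x - a * h2
  -- key pointwise identity from heq2 multiplied by v
  have key2 : ∀ x, -2 * d * lam * (v x) ^ 2 = -((u x) ^ 2 * v x) - γ * (v x) ^ 4 := by
    intro x
    linear_combination v x * heq2 x
  have hIuvneg : Integrable (fun x => -((u x) ^ 2 * v x)) := hIuv.neg
  have hIv4c : Integrable (fun x => γ * (v x) ^ 4) := hIv4.const_mul γ
  -- second equation integrated
  have int2 : -2 * d * lam * (∫ x : ℝ, (v x) ^ 2)
      = -(∫ x : ℝ, (u x) ^ 2 * v x) - γ * ∫ x : ℝ, (v x) ^ 4 := by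
    have h : (∫ x : ℝ, -2 * d * lam * (v x) ^ 2)
        = ∫ x : ℝ, (-((u x) ^ 2 * v x) - γ * (v x) ^ 4) := by
      exact integral_congr_ae (Filter.Eventually.of_forall key2)
    rw [integral_const_mul] at h
    rw [h, integral_sub hIuvneg hIv4c, integral_neg, integral_const_mul]
  by_cases hlam : lam = 0
  · -- degenerate case
    subst hlam
    have e1 : (∫ x : ℝ, (u x) ^ 2 * v x) = -a * ∫ x : ℝ, |u x| ^ (p + 2) := by
      rw [← integral_const_mul]
      refine integral_congr_ae (Filter.Eventually.of_forall fun x => ?_)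
      show (u x) ^ 2 * v x = -a * |u x| ^ (p + 2)
      have := key1 x; linarith [this]
    have e2 : (∫ x : ℝ, (u x) ^ 2 * v x) = -γ * ∫ x : ℝ, (v x) ^ 4 := by
      rw [← integral_const_mul]
      refine integral_congr_ae (Filter.Eventually.of_forall fun x => ?_)
      show (u x) ^ 2 * v x = -γ * (v x) ^ 4
      have := key2 x; linarith [this]
    rw [e1] at e2 ⊢
    linarith [e2]
  · -- main case: lam ≠ 0
    -- integrability of u * u''
    have hIlamuu'' : Integrable (fun x => lam * (u x * deriv (deriv u) x)) := by
      have : (fun x => lam * (u x * deriv (deriv u) x))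
          = fun x => lam * (u x) ^ 2 - (u x) ^ 2 * v x - a * |u x| ^ (p + 2) :=
        funext key1
      rw [this]
      exact ((hIu2.const_mul lam).sub hIuv).sub (hup.const_mul a)
    have hIuu'' : Integrable (fun x => u x * deriv (deriv u) x) := by
      have h := hIlamuu''.const_mul lam⁻¹
      refine h.congr (Filter.Eventually.of_forall fun x => ?_)
      field_simp
    -- integration by parts: ∫ u u'' = -∫ (u')²
    have hF : ∀ x : ℝ, HasDerivAt (fun y => u y * deriv u y)
        (deriv u x * deriv u x + u x * deriv (deriv u) x) x := fun x =>
      ((hud x).hasDerivAt).mul ((hu'd x).hasDerivAt)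
    have hIu'2' : Integrable (fun x => deriv u x * deriv u x) :=
      hIu'2.congr (Filter.Eventually.of_forall fun x => sq (deriv u x))
    have hIG : Integrable (fun x => deriv u x * deriv u x + u x * deriv (deriv u) x) :=
      hIu'2'.add hIuu''
    have hbot : Tendsto (fun x => u x * deriv u x) atBot (nhds 0) := by
      rw [cocompact_eq_atBot_atTop] at hdecay
      exact hdecay.mono_left le_sup_left
    have htop : Tendsto (fun x => u x * deriv u x) atTop (nhds 0) := by
      rw [cocompact_eq_atBot_atTop] at hdecay
      exact hdecay.mono_left le_sup_right
    have hIic : (∫ x in Set.Iic (0:ℝ), (deriv u x * deriv u x + u x * deriv (deriv u) x))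
        = u 0 * deriv u 0 - 0 :=
      integral_Iic_of_hasDerivAt_of_tendsto' (fun x _ => hF x) hIG.integrableOn hbot
    have hIoi : (∫ x in Set.Ioi (0:ℝ), (deriv u x * deriv u x + u x * deriv (deriv u) x))
        = 0 - u 0 * deriv u 0 :=
      integral_Ioi_of_hasDerivAt_of_tendsto' (fun x _ => hF x) hIG.integrableOn htop
    have hGzero : (∫ x : ℝ, (deriv u x * deriv u x + u x * deriv (deriv u) x)) = 0 := by
      rw [← intervalIntegral.integral_Iic_add_Ioi hIG.integrableOn hIG.integrableOn, hIic, hIoi]; ring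
    have hparts : (∫ x : ℝ, u x * deriv (deriv u) x) = -∫ x : ℝ, (deriv u x) ^ 2 := by
      have hsplit := integral_add hIu'2' hIuu''
      have heq : (∫ x : ℝ, deriv u x * deriv u x) = ∫ x : ℝ, (deriv u x) ^ 2 :=
        integral_congr_ae (Filter.Eventually.of_forall fun x => (sq (deriv u x)).symm)
      rw [hGzero] at hsplit
      linarith [hsplit, heq]
    -- integrate key1
    have int1 : lam * (∫ x : ℝ, u x * deriv (deriv u) x)
        = lam * (∫ x : ℝ, (u x) ^ 2) - (∫ x : ℝ, (u x) ^ 2 * v x)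
          - a * ∫ x : ℝ, |u x| ^ (p + 2) := by
      have h : (∫ x : ℝ, lam * (u x * deriv (deriv u) x))
          = ∫ x : ℝ, (lam * (u x) ^ 2 - (u x) ^ 2 * v x - a * |u x| ^ (p + 2)) :=
        integral_congr_ae (Filter.Eventually.of_forall key1)
      have hA : Integrable (fun x => lam * (u x) ^ 2) := hIu2.const_mul lam
      have hB : Integrable (fun x => lam * (u x) ^ 2 - (u x) ^ 2 * v x) := hA.sub hIuv
      have hC : Integrable (fun x => a * |u x| ^ (p + 2)) := hup.const_mul a
      rw [integral_const_mul] at h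
      rw [h, integral_sub hB hC, integral_sub hA hIuv, integral_const_mul, integral_const_mul]
    rw [hparts] at int1
    linarith [int1, int2]
end
end

section
/- Let p > 0, a, γ > 0, c ≥ 0 and c* ∈ ℝ. Let φ, ψ ∈ C²(ℝ) with φ, φ', φ'', ψ, ψ', ψ'' all bounded, φ ≥ 0, ψ ≤ 0, φ and -ψ radially decreasing, satisfying pointwise on ℝ the profile system -φ'' + c*φ = -φψ - a φ^{p+1} and cψ = -φ² - γψ³. Then the function x ↦ φ(x)^p is twice continuously differentiable on ℝ and φ^p, (φ^p)', (φ^p)'' are bounded; i.e. φ^p ∈ C²(ℝ) ∩ W^{2,∞}(ℝ). -/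
open MeasureTheory Filter

noncomputable section

/-- `g` is radially decreasing: even and nonincreasing on `[0,∞)`. -/
def RadialDecr (g : ℝ → ℝ) : Prop :=
  (∀ x, g (-x) = g x) ∧ AntitoneOn g (Set.Ici 0)

private lemma gron_anti {w : ℝ → ℝ} {k : ℝ} (hw : Differentiable ℝ w)
    (hw' : ∀ x, deriv w x ≤ k * w x) :
    Antitone (fun x => w x * Real.exp (-(k * x))) := by
  have hder : ∀ x, HasDerivAt (fun x => w x * Real.exp (-(k * x)))
      ((deriv w x - k * w x) * Real.exp (-(k * x))) x := by
    intro x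
    have h1 : HasDerivAt w (deriv w x) x := (hw x).hasDerivAt
    have h0 : HasDerivAt (fun x : ℝ => -(k * x)) (-k) x := by
      simpa using ((hasDerivAt_id x).const_mul k).fun_neg
    have h2 : HasDerivAt (fun x => Real.exp (-(k * x))) (Real.exp (-(k * x)) * (-k)) x :=
      (Real.hasDerivAt_exp _).comp x h0
    have := h1.fun_mul h2
    exact this.congr_deriv (by ring)
  have hdiff : Differentiable ℝ (fun x => w x * Real.exp (-(k * x))) :=
    fun x => (hder x).differentiableAt
  apply antitone_of_deriv_nonpos hdiff
  intro x
  rw [(hder x).deriv]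
  have h3 : deriv w x - k * w x ≤ 0 := by linarith [hw' x]
  exact mul_nonpos_of_nonpos_of_nonneg h3 (Real.exp_nonneg _)

private lemma gron_mono {w : ℝ → ℝ} {k : ℝ} (hw : Differentiable ℝ w)
    (hw' : ∀ x, -(k * w x) ≤ deriv w x) :
    Monotone (fun x => w x * Real.exp (k * x)) := by
  have hder : ∀ x, HasDerivAt (fun x => w x * Real.exp (k * x))
      ((deriv w x + k * w x) * Real.exp (k * x)) x := by
    intro x
    have h1 : HasDerivAt w (deriv w x) x := (hw x).hasDerivAt
    have h0 : HasDerivAt (fun x : ℝ => k * x) k x := by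
      simpa using (hasDerivAt_id x).const_mul k
    have h2 : HasDerivAt (fun x => Real.exp (k * x)) (Real.exp (k * x) * k) x :=
      (Real.hasDerivAt_exp _).comp x h0
    have := h1.fun_mul h2
    exact this.congr_deriv (by ring)
  have hdiff : Differentiable ℝ (fun x => w x * Real.exp (k * x)) :=
    fun x => (hder x).differentiableAt
  apply monotone_of_deriv_nonneg hdiff
  intro x
  rw [(hder x).deriv]
  have h3 : 0 ≤ deriv w x + k * w x := by linarith [hw' x]
  exact mul_nonneg h3 (Real.exp_nonneg _)

/-- If `w' ≤ k w` and `w` is bounded below, then `w ≥ 0` everywhere. -/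
private lemma w_nonneg {w : ℝ → ℝ} {k M : ℝ} (hk : 0 < k) (hw : Differentiable ℝ w)
    (hw' : ∀ x, deriv w x ≤ k * w x) (hlow : ∀ x, -M ≤ w x) : ∀ x, 0 ≤ w x := by
  intro x1
  by_contra hcon
  push_neg at hcon
  set u1 := w x1 * Real.exp (-(k * x1)) with hu1
  have hu1neg : u1 < 0 := mul_neg_of_neg_of_pos hcon (Real.exp_pos _)
  have hM : 0 ≤ M := by have := hlow x1; linarith
  set e := (M + 1) / (-u1) with he
  have hepos : 0 < e := div_pos (by linarith) (by linarith)
  set x := max x1 (Real.log e / k) with hx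
  have hx1 : x1 ≤ x := le_max_left _ _
  have hexp : e ≤ Real.exp (k * x) := by
    calc e = Real.exp (Real.log e) := (Real.exp_log hepos).symm
      _ ≤ Real.exp (k * x) := by
          apply Real.exp_le_exp.mpr
          have h4 : Real.log e / k ≤ x := le_max_right _ _
          calc Real.log e = k * (Real.log e / k) := by field_simp
            _ ≤ k * x := by nlinarith
  have hmono : w x * Real.exp (-(k * x)) ≤ u1 := gron_anti hw hw' hx1
  have h2 : w x ≤ u1 * Real.exp (k * x) := by
    have hpos := Real.exp_pos (k * x)
    have h5 := mul_le_mul_of_nonneg_right hmono hpos.le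
    rwa [mul_assoc, ← Real.exp_add, neg_add_cancel, Real.exp_zero, mul_one] at h5
  have h4 : u1 * Real.exp (k * x) ≤ u1 * e := by
    exact mul_le_mul_of_nonpos_left hexp hu1neg.le
  have h5 : u1 * e = -(M + 1) := by
    rw [he]
    field_simp [hu1neg.ne]
  linarith [hlow x]

private lemma even_deriv_odd {φ : ℝ → ℝ} (hd : Differentiable ℝ φ)
    (heven : ∀ x, φ (-x) = φ x) (x : ℝ) : deriv φ (-x) = -deriv φ x := by
  have h1 : HasDerivAt (fun y : ℝ => φ (-y)) (deriv φ (-x) * (-1)) x :=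
    (hd (-x)).hasDerivAt.comp x (hasDerivAt_neg x)
  have h2 : (fun y : ℝ => φ (-y)) = φ := funext heven
  rw [h2] at h1
  have h3 := (hd x).hasDerivAt.unique h1
  linarith

/-- Key gradient bound: `|φ'| ≤ k φ` for nonnegative even solutions of `φ'' = g φ`,
`|g| ≤ k²`, with bounded derivative. -/
private lemma key_deriv_bound {φ g : ℝ → ℝ} {k M : ℝ} (hk : 0 < k)
    (hd1 : Differentiable ℝ φ) (hd2 : Differentiable ℝ (deriv φ))
    (hpos : ∀ x, 0 ≤ φ x) (heven : ∀ x, φ (-x) = φ x)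
    (hM : ∀ x, |deriv φ x| ≤ M)
    (hode : ∀ x, deriv (deriv φ) x = g x * φ x) (hg : ∀ x, |g x| ≤ k ^ 2) :
    ∀ x, |deriv φ x| ≤ k * φ x := by
  set w := fun x => deriv φ x + k * φ x with hw
  have hwd : Differentiable ℝ w := hd2.add (hd1.const_mul k)
  have hwderiv : ∀ x, deriv w x = deriv (deriv φ) x + k * deriv φ x := by
    intro x
    rw [hw]
    rw [deriv_fun_add (hd2 x) ((hd1 x).const_mul k)]
    rw [deriv_const_mul _ (hd1 x)]
  have hw' : ∀ x, deriv w x ≤ k * w x := by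
    intro x
    rw [hwderiv x, hode x]
    have h1 : g x ≤ k ^ 2 := (abs_le.mp (hg x)).2
    have h2 := hpos x
    simp only [hw]
    nlinarith
  have hlow : ∀ x, -M ≤ w x := by
    intro x
    have h1 := (abs_le.mp (hM x)).1
    have h2 := mul_nonneg hk.le (hpos x)
    simp only [hw]
    linarith
  have hwpos := w_nonneg hk hwd hw' hlow
  intro x
  rw [abs_le]
  constructor
  · have := hwpos x; simp only [hw] at this; linarith
  · have hodd := even_deriv_odd hd1 heven x
    have := hwpos (-x)
    simp only [hw] at this
    rw [hodd, heven x] at this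
    linarith

/-- If `|φ'| ≤ k φ`, `φ ≥ 0` and `φ` vanishes somewhere, it vanishes everywhere. -/
private lemma zero_prop {φ : ℝ → ℝ} {k : ℝ} (hd : Differentiable ℝ φ)
    (hpos : ∀ x, 0 ≤ φ x) (hb : ∀ x, |deriv φ x| ≤ k * φ x)
    {x0 : ℝ} (h0 : φ x0 = 0) : ∀ x, φ x = 0 := by
  have hanti := gron_anti hd (fun x => (abs_le.mp (hb x)).2)
  have hmono := gron_mono hd (fun x => (abs_le.mp (hb x)).1)
  intro x
  rcases le_total x0 x with h | h
  · have h1 : φ x * Real.exp (-(k * x)) ≤ φ x0 * Real.exp (-(k * x0)) := hanti h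
    rw [h0, zero_mul] at h1
    nlinarith [Real.exp_pos (-(k * x)), hpos x]
  · have h1 : φ x * Real.exp (k * x) ≤ φ x0 * Real.exp (k * x0) := hmono h
    rw [h0, zero_mul] at h1
    nlinarith [Real.exp_pos (k * x), hpos x]

/-- Remark 2 of the paper: if `p > 0`, `c ≥ 0` and
`(φ,ψ) ∈ (C² ∩ W^{2,∞})²` is a nonnegative/nonpositive radially decreasing
solution of the profile system `-φ'' + c*φ = -φψ - aφ^{p+1}`, `cψ = -φ² - γψ³`,
then `φ^p ∈ C²(ℝ) ∩ W^{2,∞}(ℝ)`. -/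
theorem phi_pow_p_regular (p a γ c cs : ℝ) (hp : 0 < p) (ha : 0 < a) (hγ : 0 < γ)
    (hc : 0 ≤ c) (φ ψ : ℝ → ℝ)
    (hφ : ContDiff ℝ 2 φ) (hψ : ContDiff ℝ 2 ψ)
    (hφb : ∃ M, ∀ x, |φ x| ≤ M ∧ |deriv φ x| ≤ M ∧ |deriv (deriv φ) x| ≤ M)
    (hψb : ∃ M, ∀ x, |ψ x| ≤ M ∧ |deriv ψ x| ≤ M ∧ |deriv (deriv ψ) x| ≤ M)
    (hφpos : ∀ x, 0 ≤ φ x) (hψneg : ∀ x, ψ x ≤ 0)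
    (hrd1 : RadialDecr φ) (hrd2 : RadialDecr (fun x => -ψ x))
    (heq1 : ∀ x, -deriv (deriv φ) x + cs * φ x = -(φ x * ψ x) - a * φ x ^ (p + 1))
    (heq2 : ∀ x, c * ψ x = -(φ x) ^ 2 - γ * (ψ x) ^ 3) :
    ContDiff ℝ 2 (fun x => φ x ^ p) ∧
    ∃ M, ∀ x, |φ x ^ p| ≤ M ∧ |deriv (fun y => φ y ^ p) x| ≤ M ∧
      |deriv (deriv (fun y => φ y ^ p)) x| ≤ M := by
  obtain ⟨Mφ, hMφ⟩ := hφb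
  obtain ⟨Mψ, hMψ⟩ := hψb
  have hMφ0 : 0 ≤ Mφ := le_trans (abs_nonneg _) (hMφ 0).1
  have hMψ0 : 0 ≤ Mψ := le_trans (abs_nonneg _) (hMψ 0).1
  have hd1 : Differentiable ℝ φ := hφ.differentiable (by norm_num)
  have hc1 : ContDiff ℝ 1 (deriv φ) := by
    have h2 : ContDiff ℝ (1 + 1) φ := by norm_num; exact hφ
    exact (contDiff_succ_iff_deriv.mp h2).2.2
  have hd2 : Differentiable ℝ (deriv φ) := hc1.differentiable one_ne_zero
  set g := fun x => cs + ψ x + a * φ x ^ p with hg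
  have hode : ∀ x, deriv (deriv φ) x = g x * φ x := by
    intro x
    have h1 := heq1 x
    have h2 : φ x ^ (p + 1) = φ x ^ p * φ x :=
      Real.rpow_add_one' (hφpos x) (by linarith)
    rw [h2] at h1
    simp only [hg]
    linear_combination -h1
  set K := |cs| + Mψ + a * Mφ ^ p with hK
  have hrpowB : ∀ x, φ x ^ p ≤ Mφ ^ p := fun x =>
    Real.rpow_le_rpow (hφpos x) (le_trans (le_abs_self _) (hMφ x).1) hp.le
  have hK0 : 0 ≤ K := by
    have := Real.rpow_nonneg hMφ0 p
    have := abs_nonneg cs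
    positivity
  have hgK : ∀ x, |g x| ≤ K := by
    intro x
    have h1 : |g x| ≤ |cs| + |ψ x| + |a * φ x ^ p| := abs_add_three _ _ _
    have h2 : |ψ x| ≤ Mψ := (hMψ x).1
    have h3 : |a * φ x ^ p| = a * φ x ^ p := by
      rw [abs_of_nonneg]
      exact mul_nonneg ha.le (Real.rpow_nonneg (hφpos x) p)
    have h4 : a * φ x ^ p ≤ a * Mφ ^ p :=
      mul_le_mul_of_nonneg_left (hrpowB x) ha.le
    rw [h3] at h1
    simp only [hK]
    linarith
  set k := Real.sqrt (K + 1) with hkdef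
  have hk : 0 < k := Real.sqrt_pos.mpr (by linarith)
  have hk2 : k ^ 2 = K + 1 := Real.sq_sqrt (by linarith)
  have hg2 : ∀ x, |g x| ≤ k ^ 2 := fun x => by rw [hk2]; linarith [hgK x]
  have key : ∀ x, |deriv φ x| ≤ k * φ x :=
    key_deriv_bound hk hd1 hd2 hφpos hrd1.1 (fun x => (hMφ x).2.1) hode hg2
  by_cases hzero : ∃ x0, φ x0 = 0
  · -- φ ≡ 0
    obtain ⟨x0, h0⟩ := hzero
    have hall := zero_prop hd1 hφpos key h0
    have hfun : (fun x => φ x ^ p) = fun _ => (0 : ℝ) := by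
      funext x
      rw [hall x, Real.zero_rpow hp.ne']
    constructor
    · rw [hfun]; exact contDiff_const
    · refine ⟨0, fun x => ?_⟩
      rw [hfun]
      simp [hall x, Real.zero_rpow hp.ne']
  · push_neg at hzero
    have hφx : ∀ x, 0 < φ x := fun x => lt_of_le_of_ne (hφpos x) (Ne.symm (hzero x))
    have hF' : ∀ x, HasDerivAt (fun y => φ y ^ p) (deriv φ x * p * φ x ^ (p - 1)) x :=
      fun x => (hd1 x).hasDerivAt.rpow_const (Or.inl (hzero x))
    have hder1 : deriv (fun y => φ y ^ p) = fun x => deriv φ x * p * φ x ^ (p - 1) :=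
      funext fun x => (hF' x).deriv
    have hG : ∀ x, HasDerivAt (fun y => deriv φ y * p * φ y ^ (p - 1))
        (deriv (deriv φ) x * p * φ x ^ (p - 1) +
          deriv φ x * p * (deriv φ x * (p - 1) * φ x ^ (p - 1 - 1))) x := by
      intro x
      have h1 : HasDerivAt (fun y => deriv φ y * p) (deriv (deriv φ) x * p) x :=
        (hd2 x).hasDerivAt.mul_const p
      have h2 : HasDerivAt (fun y => φ y ^ (p - 1))
          (deriv φ x * (p - 1) * φ x ^ (p - 1 - 1)) x :=
        (hd1 x).hasDerivAt.rpow_const (Or.inl (hzero x))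
      exact h1.mul h2
    have hder2 : ∀ x, deriv (deriv (fun y => φ y ^ p)) x =
        deriv (deriv φ) x * p * φ x ^ (p - 1) +
          deriv φ x * p * (deriv φ x * (p - 1) * φ x ^ (p - 1 - 1)) := by
      intro x
      rw [hder1]
      exact (hG x).deriv
    -- useful identities and bounds
    have hid1 : ∀ x, φ x ^ (p - 1) * φ x = φ x ^ p := by
      intro x
      rw [Real.rpow_sub_one (hzero x), div_mul_cancel₀ _ (hzero x)]
    have hid2 : ∀ x, φ x ^ (p - 1 - 1) * φ x * φ x = φ x ^ p := by
      intro x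
      rw [Real.rpow_sub_one (hzero x), Real.rpow_sub_one (hzero x),
        div_mul_cancel₀ _ (hzero x), div_mul_cancel₀ _ (hzero x)]
    set B := Mφ ^ p with hB
    have hB0 : 0 ≤ B := Real.rpow_nonneg hMφ0 p
    refine ⟨contDiff_iff_contDiffAt.mpr fun x => hφ.contDiffAt.rpow_const_of_ne (hzero x),
      B + p * k * B + (p * k ^ 2 * B + p * |p - 1| * k ^ 2 * B), fun x => ?_⟩
    have hr1 : (0 : ℝ) ≤ φ x ^ (p - 1) := Real.rpow_nonneg (hφpos x) _
    have hr2 : (0 : ℝ) ≤ φ x ^ (p - 1 - 1) := Real.rpow_nonneg (hφpos x) _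
    have hrp : (0 : ℝ) ≤ φ x ^ p := Real.rpow_nonneg (hφpos x) _
    have hkx := key x
    have habs := abs_nonneg (deriv φ x)
    have hBx := hrpowB x
    have hnn1 : 0 ≤ p * k * B := by positivity
    have hnn2 : 0 ≤ p * k ^ 2 * B := by positivity
    have hnn3 : 0 ≤ p * |p - 1| * k ^ 2 * B := by positivity
    refine ⟨?_, ?_, ?_⟩
    · rw [abs_of_nonneg hrp]
      linarith
    · rw [hder1]
      have h1 : |deriv φ x * p * φ x ^ (p - 1)| = |deriv φ x| * p * φ x ^ (p - 1) := by
        rw [abs_mul, abs_mul, abs_of_nonneg hp.le, abs_of_nonneg hr1]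
      rw [h1]
      have h2 : |deriv φ x| * p * φ x ^ (p - 1) ≤ (k * φ x) * p * φ x ^ (p - 1) := by
        apply mul_le_mul_of_nonneg_right (mul_le_mul_of_nonneg_right hkx hp.le) hr1
      have h3 : (k * φ x) * p * φ x ^ (p - 1) = p * k * (φ x ^ (p - 1) * φ x) := by ring
      rw [h3, hid1 x] at h2
      have h4 : p * k * φ x ^ p ≤ p * k * B := by
        apply mul_le_mul_of_nonneg_left hBx (by positivity)
      linarith
    · rw [hder2 x]
      have hD2 : |deriv (deriv φ) x| ≤ k ^ 2 * φ x := by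
        rw [hode x, abs_mul, abs_of_nonneg (hφpos x)]
        exact mul_le_mul_of_nonneg_right (hg2 x) (hφpos x)
      have t1 : |deriv (deriv φ) x * p * φ x ^ (p - 1)| ≤ p * k ^ 2 * B := by
        rw [abs_mul, abs_mul, abs_of_nonneg hp.le, abs_of_nonneg hr1]
        have h2 : |deriv (deriv φ) x| * p * φ x ^ (p - 1) ≤
            (k ^ 2 * φ x) * p * φ x ^ (p - 1) :=
          mul_le_mul_of_nonneg_right (mul_le_mul_of_nonneg_right hD2 hp.le) hr1
        have h3 : (k ^ 2 * φ x) * p * φ x ^ (p - 1) = p * k ^ 2 * (φ x ^ (p - 1) * φ x) := by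
          ring
        rw [h3, hid1 x] at h2
        have h4 : p * k ^ 2 * φ x ^ p ≤ p * k ^ 2 * B :=
          mul_le_mul_of_nonneg_left hBx (by positivity)
        linarith
      have t2 : |deriv φ x * p * (deriv φ x * (p - 1) * φ x ^ (p - 1 - 1))| ≤
          p * |p - 1| * k ^ 2 * B := by
        have h1 : |deriv φ x * p * (deriv φ x * (p - 1) * φ x ^ (p - 1 - 1))| =
            |deriv φ x| * p * (|deriv φ x| * |p - 1| * φ x ^ (p - 1 - 1)) := by
          rw [abs_mul, abs_mul, abs_mul, abs_mul, abs_of_nonneg hp.le, abs_of_nonneg hr2]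
        rw [h1]
        have hφx0 := (hφx x).le
        have h2 : |deriv φ x| * p * (|deriv φ x| * |p - 1| * φ x ^ (p - 1 - 1)) ≤
            (k * φ x) * p * ((k * φ x) * |p - 1| * φ x ^ (p - 1 - 1)) := by
          have hkφ : 0 ≤ k * φ x := mul_nonneg hk.le hφx0
          have hp1 : (0 : ℝ) ≤ |p - 1| := abs_nonneg _
          nlinarith [mul_le_mul hkx hkx habs hkφ, mul_nonneg (mul_nonneg hp.le hp1) hr2]
        have h3 : (k * φ x) * p * ((k * φ x) * |p - 1| * φ x ^ (p - 1 - 1)) =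
            p * |p - 1| * k ^ 2 * (φ x ^ (p - 1 - 1) * φ x * φ x) := by ring
        rw [h3, hid2 x] at h2
        have h4 : p * |p - 1| * k ^ 2 * φ x ^ p ≤ p * |p - 1| * k ^ 2 * B :=
          mul_le_mul_of_nonneg_left hBx (by positivity)
        linarith
      calc |deriv (deriv φ) x * p * φ x ^ (p - 1) +
            deriv φ x * p * (deriv φ x * (p - 1) * φ x ^ (p - 1 - 1))|
          ≤ |deriv (deriv φ) x * p * φ x ^ (p - 1)| +
            |deriv φ x * p * (deriv φ x * (p - 1) * φ x ^ (p - 1 - 1))| := abs_add_le _ _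
        _ ≤ p * k ^ 2 * B + p * |p - 1| * k ^ 2 * B := add_le_add t1 t2
        _ ≤ B + p * k * B + (p * k ^ 2 * B + p * |p - 1| * k ^ 2 * B) := by linarith
end
end

section
/- Let a, γ, ω > 0 and -1 < p < 0, and define h : [0,∞) → ℝ by h(s) = (2a/(p+2)) s^{p+2} + ω s² - (3/4) γ^{-1/3} s^{8/3}. Then: (i) there exists φ₀ > 0 such that h(φ₀) = 0 and h(s) > 0 for all s ∈ (0, φ₀); (ii) if moreover h is differentiable at φ₀ with h'(φ₀) < 0, then the improper integral ∫₀^{φ₀} h(s)^{-1/2} ds is finite. -/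
open MeasureTheory Filter Set Topology

noncomputable section

/-- The first integral `h(s) = (2a/(p+2)) s^{p+2} + ω s² - (3/4) γ^{-1/3} s^{8/3}`
of the standing-wave equation. -/
def hFun (p a γ ω : ℝ) (s : ℝ) : ℝ :=
  (2 * a / (p + 2)) * s ^ (p + 2) + ω * s ^ 2 - (3/4) * γ ^ (-(1:ℝ)/3) * s ^ ((8:ℝ)/3)

lemma continuous_hFun (p a γ ω : ℝ) (hp1 : -1 < p) : Continuous (hFun p a γ ω) := by
  unfold hFun
  exact ((continuous_const.mul (Real.continuous_rpow_const (by linarith))).add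
    (continuous_const.mul (continuous_pow 2))).sub
    (continuous_const.mul (Real.continuous_rpow_const (by norm_num)))

lemma hFun_lower (p a γ ω : ℝ) (hp1 : -1 < p) (hp0 : p < 0) (ha : 0 < a) (hγ : 0 < γ) :
    ∃ δ > (0:ℝ), ∀ s : ℝ, 0 < s → s ≤ δ →
      (2 * a / (p + 2)) / 2 * s ^ (p + 2) + ω * s ^ 2 ≤ hFun p a γ ω s := by
  set c1 := 2 * a / (p + 2) with hc1def
  set c2 := (3/4) * γ ^ (-(1:ℝ)/3) with hc2def
  have hp2 : (0:ℝ) < p + 2 := by linarith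
  have hc1 : 0 < c1 := div_pos (by linarith) hp2
  have hc2 : 0 < c2 := by positivity
  set q : ℝ := 2/3 - p with hqdef
  have hq : 0 < q := by rw [hqdef]; linarith
  set δ : ℝ := min 1 ((c1 / (2 * c2)) ^ (1/q)) with hδdef
  have hδpos : 0 < δ := lt_min one_pos (Real.rpow_pos_of_pos (div_pos hc1 (by positivity)) _)
  refine ⟨δ, hδpos, fun s hs hsδ => ?_⟩
  have hsq : s ^ q ≤ c1 / (2 * c2) := by
    calc s ^ q ≤ ((c1 / (2 * c2)) ^ (1/q)) ^ q :=
          Real.rpow_le_rpow hs.le (hsδ.trans (min_le_right _ _)) hq.le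
      _ = (c1 / (2 * c2)) ^ ((1/q) * q) := (Real.rpow_mul (by positivity) _ _).symm
      _ = c1 / (2 * c2) := by
          rw [one_div_mul_cancel hq.ne', Real.rpow_one]
  have h0 : (0:ℝ) < c1 / (2 * c2) := div_pos hc1 (by positivity)
  have hsplit : s ^ ((8:ℝ)/3) = s ^ (p + 2) * s ^ q := by
    rw [← Real.rpow_add hs]; congr 1; rw [hqdef]; ring
  have hsp : (0:ℝ) < s ^ (p + 2) := Real.rpow_pos_of_pos hs _
  have key : c2 * s ^ q ≤ c1 / 2 := by
    calc c2 * s ^ q ≤ c2 * (c1 / (2 * c2)) := mul_le_mul_of_nonneg_left hsq hc2.le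
      _ = c1 / 2 := by field_simp
  unfold hFun
  rw [← hc1def, ← hc2def, hsplit]
  nlinarith [mul_le_mul_of_nonneg_right key hsp.le]

lemma exists_neg (p a γ ω : ℝ) (hp1 : -1 < p) (hp0 : p < 0) (ha : 0 < a) (hγ : 0 < γ)
    (hω : 0 < ω) : ∃ M > (0:ℝ), hFun p a γ ω M ≤ 0 := by
  set c1 := 2 * a / (p + 2) with hc1def
  set c2 := (3/4) * γ ^ (-(1:ℝ)/3) with hc2def
  have hp2 : (0:ℝ) < p + 2 := by linarith
  have hc1 : 0 < c1 := div_pos (by linarith) hp2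
  have hc2 : 0 < c2 := by positivity
  set B : ℝ := (c1 + ω) / c2 with hBdef
  have hB : 0 < B := div_pos (by linarith) hc2
  set M : ℝ := max 1 (B ^ ((3:ℝ)/2)) with hMdef
  have hM1 : (1:ℝ) ≤ M := le_max_left _ _
  have hMpos : 0 < M := lt_of_lt_of_le one_pos hM1
  refine ⟨M, hMpos, ?_⟩
  have hM23 : B ≤ M ^ ((2:ℝ)/3) := by
    calc B = (B ^ ((3:ℝ)/2)) ^ ((2:ℝ)/3) := by
          rw [← Real.rpow_mul hB.le]; norm_num
      _ ≤ M ^ ((2:ℝ)/3) := Real.rpow_le_rpow (by positivity) (le_max_right _ _) (by norm_num)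
  have h1 : M ^ (p + 2) ≤ M ^ 2 := by
    have := Real.rpow_le_rpow_of_exponent_le hM1 (by linarith : p + 2 ≤ (2:ℝ))
    rwa [show ((2:ℝ)) = ((2:ℕ):ℝ) by norm_num, Real.rpow_natCast] at this
  have h83 : M ^ ((8:ℝ)/3) = M ^ 2 * M ^ ((2:ℝ)/3) := by
    rw [← Real.rpow_natCast M 2, ← Real.rpow_add hMpos]; norm_num
  have hcB : c2 * B = c1 + ω := by rw [hBdef]; field_simp
  have hM2 : (0:ℝ) < M ^ 2 := by positivity
  unfold hFun
  rw [← hc1def, ← hc2def, h83]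
  nlinarith [mul_le_mul_of_nonneg_left hM23 (mul_pos hc2 hM2).le]

lemma part_one (p a γ ω : ℝ) (hp1 : -1 < p) (hp0 : p < 0) (ha : 0 < a) (hγ : 0 < γ)
    (hω : 0 < ω) :
    ∃ φ₀ > (0:ℝ), hFun p a γ ω φ₀ = 0 ∧
      ∀ s : ℝ, 0 < s → s < φ₀ → 0 < hFun p a γ ω s := by
  obtain ⟨δ, hδpos, hlow⟩ := hFun_lower p a γ ω hp1 hp0 ha hγ
  obtain ⟨M, hMpos, hMneg⟩ := exists_neg p a γ ω hp1 hp0 ha hγ hω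
  have hcont := continuous_hFun p a γ ω hp1
  have hp2 : (0:ℝ) < p + 2 := by linarith
  have hposδ : ∀ s : ℝ, 0 < s → s ≤ δ → 0 < hFun p a γ ω s := fun s hs hsδ =>
    lt_of_lt_of_le (by positivity) (hlow s hs hsδ)
  set T : Set ℝ := Ici δ ∩ hFun p a γ ω ⁻¹' Iic 0 with hTdef
  have hδM : δ ≤ M := by
    by_contra hc
    exact absurd hMneg (not_le.mpr (hposδ M hMpos (le_of_not_ge hc)))
  have hTne : T.Nonempty := ⟨M, hδM, hMneg⟩
  have hTbdd : BddBelow T := ⟨δ, fun x hx => hx.1⟩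
  have hTcl : IsClosed T := isClosed_Ici.inter (isClosed_Iic.preimage hcont)
  set φ₀ : ℝ := sInf T with hφdef
  have hmem : φ₀ ∈ T := hTcl.csInf_mem hTne hTbdd
  have hφpos : 0 < φ₀ := lt_of_lt_of_le hδpos hmem.1
  have hpos : ∀ s : ℝ, 0 < s → s < φ₀ → 0 < hFun p a γ ω s := by
    intro s hs hsφ
    rcases le_or_gt s δ with h | h
    · exact hposδ s hs h
    · by_contra hc
      have : s ∈ T := ⟨h.le, le_of_not_gt hc⟩
      exact absurd (csInf_le hTbdd this) (not_le.mpr hsφ)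
  refine ⟨φ₀, hφpos, le_antisymm hmem.2 ?_, hpos⟩
  have htend : Tendsto (hFun p a γ ω) (𝓝[<] φ₀) (𝓝 (hFun p a γ ω φ₀)) :=
    (hcont.continuousAt).tendsto.mono_left nhdsWithin_le_nhds
  refine ge_of_tendsto htend ?_
  filter_upwards [Ioo_mem_nhdsLT_of_mem (⟨hφpos, le_refl _⟩ : φ₀ ∈ Ioc 0 φ₀)] with s hs
  exact (hpos s hs.1 hs.2).le

lemma part_two (p a γ ω : ℝ) (hp1 : -1 < p) (hp0 : p < 0) (ha : 0 < a) (hγ : 0 < γ)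
    (hω : 0 < ω) (φ₀ : ℝ) (hφpos : 0 < φ₀) (hzero : hFun p a γ ω φ₀ = 0)
    (hpos : ∀ s : ℝ, 0 < s → s < φ₀ → 0 < hFun p a γ ω s)
    (h' : ℝ) (hderiv : HasDerivAt (hFun p a γ ω) h' φ₀) (hneg : h' < 0) :
    IntegrableOn (fun s => (hFun p a γ ω s) ^ (-(1:ℝ)/2)) (Set.Ioo 0 φ₀) := by
  obtain ⟨δ, hδpos, hlow⟩ := hFun_lower p a γ ω hp1 hp0 ha hγ
  have hcont := continuous_hFun p a γ ω hp1
  have hp2 : (0:ℝ) < p + 2 := by linarith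
  set c1 := 2 * a / (p + 2) with hc1def
  have hc1 : 0 < c1 := div_pos (by linarith) hp2
  -- δ < φ₀
  have hδφ : δ < φ₀ := by
    by_contra hc
    have := lt_of_lt_of_le (by positivity : (0:ℝ) < c1/2 * φ₀ ^ (p+2) + ω * φ₀ ^ 2)
      (hlow φ₀ hφpos (le_of_not_gt hc))
    rw [hzero] at this; exact lt_irrefl 0 this
  -- derivative estimate near φ₀
  have hslope : Tendsto (slope (hFun p a γ ω) φ₀) (𝓝[<] φ₀) (𝓝 h') :=
    (hasDerivAt_iff_tendsto_slope.mp hderiv).mono_left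
      (nhdsWithin_mono _ fun x hx => ne_of_lt hx)
  have hev : ∀ᶠ s in 𝓝[<] φ₀, slope (hFun p a γ ω) φ₀ s < h' / 2 :=
    hslope.eventually (Filter.Tendsto.eventually_lt_const (by linarith) tendsto_id)
  obtain ⟨l, hl, hsub⟩ := mem_nhdsLT_iff_exists_Ioo_subset.mp hev
  set K : ℝ := -h' / 2 with hKdef
  have hK : 0 < K := by rw [hKdef]; linarith
  set m : ℝ := max δ (max l 0) with hmdef
  have hmφ : m < φ₀ := by
    rw [hmdef]
    exact max_lt hδφ (max_lt hl hφpos)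
  have hδm : δ ≤ m := le_max_left _ _
  have hm0 : 0 < m := lt_of_lt_of_le hδpos hδm
  have hKbound : ∀ s : ℝ, s ∈ Ioo m φ₀ → K * (φ₀ - s) ≤ hFun p a γ ω s := by
    intro s hs
    have hls : s ∈ Ioo l φ₀ := ⟨lt_of_le_of_lt (le_max_left l 0 |>.trans (le_max_right δ _)) hs.1 |>.trans_le (le_refl s) |>.trans_le (le_refl s), hs.2⟩
    have hsl := hsub hls
    have hsl' : slope (hFun p a γ ω) φ₀ s < h' / 2 := hsl
    rw [slope_def_field] at hsl'
    have hsub0 : s - φ₀ < 0 := by linarith [hs.2]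
    rw [div_lt_iff_of_neg hsub0] at hsl'
    · rw [hzero] at hsl'
      rw [hKdef]; nlinarith
  -- piece A : Ioc 0 δ
  have hcontA : ContinuousOn (fun s => (hFun p a γ ω s) ^ (-(1:ℝ)/2)) (Ioc 0 δ) :=
    ContinuousOn.rpow_const hcont.continuousOn fun s hs =>
      Or.inl (ne_of_gt (hpos s hs.1 (lt_of_le_of_lt hs.2 hδφ)))
  have hgA : IntegrableOn (fun s => (c1/2) ^ (-(1:ℝ)/2) * s ^ ((p+2) * (-(1:ℝ)/2)))
      (Ioc 0 δ) := by
    have : IntervalIntegrable (fun s : ℝ => s ^ ((p+2) * (-(1:ℝ)/2))) volume 0 δ :=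
      intervalIntegral.intervalIntegrable_rpow' (by linarith)
    rw [intervalIntegrable_iff_integrableOn_Ioc_of_le hδpos.le] at this
    exact this.const_mul _
  have hA : IntegrableOn (fun s => (hFun p a γ ω s) ^ (-(1:ℝ)/2)) (Ioc 0 δ) := by
    refine Integrable.mono' hgA (hcontA.aestronglyMeasurable measurableSet_Ioc) ?_
    rw [ae_restrict_iff' measurableSet_Ioc]
    refine ae_of_all _ fun s hs => ?_
    have hs0 : 0 < s := hs.1
    have hh : 0 < hFun p a γ ω s := hpos s hs0 (lt_of_le_of_lt hs.2 hδφ)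
    have hb : c1/2 * s ^ (p+2) ≤ hFun p a γ ω s := by
      have := hlow s hs0 hs.2
      nlinarith [sq_nonneg s]
    have hbpos : (0:ℝ) < c1/2 * s ^ (p+2) := by
      have := Real.rpow_pos_of_pos hs0 (p+2); positivity
    rw [Real.norm_eq_abs, abs_of_nonneg (Real.rpow_nonneg hh.le _)]
    calc (hFun p a γ ω s) ^ (-(1:ℝ)/2) ≤ (c1/2 * s ^ (p+2)) ^ (-(1:ℝ)/2) :=
          Real.rpow_le_rpow_of_nonpos hbpos hb (by norm_num)
      _ = (c1/2) ^ (-(1:ℝ)/2) * s ^ ((p+2) * (-(1:ℝ)/2)) := by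
          rw [Real.mul_rpow (by positivity) (Real.rpow_nonneg hs0.le _),
            ← Real.rpow_mul hs0.le]
    done
  -- piece B : Icc δ m
  have hB : IntegrableOn (fun s => (hFun p a γ ω s) ^ (-(1:ℝ)/2)) (Icc δ m) := by
    refine ContinuousOn.integrableOn_compact isCompact_Icc ?_
    exact ContinuousOn.rpow_const hcont.continuousOn fun s hs =>
      Or.inl (ne_of_gt (hpos s (lt_of_lt_of_le hδpos hs.1) (lt_of_le_of_lt hs.2 hmφ)))
  -- piece C : Ioo m φ₀
  have hcontC : ContinuousOn (fun s => (hFun p a γ ω s) ^ (-(1:ℝ)/2)) (Ioo m φ₀) :=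
    ContinuousOn.rpow_const hcont.continuousOn fun s hs =>
      Or.inl (ne_of_gt (hpos s (lt_trans hm0 hs.1) hs.2))
  have hgC : IntegrableOn (fun s => K ^ (-(1:ℝ)/2) * (φ₀ - s) ^ (-(1:ℝ)/2))
      (Ioo m φ₀) := by
    have h1 : IntervalIntegrable (fun s : ℝ => s ^ (-(1:ℝ)/2)) volume 0 (φ₀ - m) :=
      intervalIntegral.intervalIntegrable_rpow' (by norm_num)
    have h2 := h1.comp_sub_left φ₀
    simp only [sub_zero, sub_sub_cancel] at h2
    have h3 := h2.symm
    rw [intervalIntegrable_iff_integrableOn_Ioc_of_le hmφ.le] at h3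
    have h4 : IntegrableOn (fun s => K ^ (-(1:ℝ)/2) * (φ₀ - s) ^ (-(1:ℝ)/2)) (Ioc m φ₀) :=
      h3.const_mul _
    exact h4.mono_set Ioo_subset_Ioc_self
  have hC : IntegrableOn (fun s => (hFun p a γ ω s) ^ (-(1:ℝ)/2)) (Ioo m φ₀) := by
    refine Integrable.mono' hgC (hcontC.aestronglyMeasurable measurableSet_Ioo) ?_
    rw [ae_restrict_iff' measurableSet_Ioo]
    refine ae_of_all _ fun s hs => ?_
    have hh : 0 < hFun p a γ ω s := hpos s (lt_trans hm0 hs.1) hs.2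
    have hb := hKbound s hs
    have hbpos : (0:ℝ) < K * (φ₀ - s) := mul_pos hK (by linarith [hs.2])
    rw [Real.norm_eq_abs, abs_of_nonneg (Real.rpow_nonneg hh.le _)]
    calc (hFun p a γ ω s) ^ (-(1:ℝ)/2) ≤ (K * (φ₀ - s)) ^ (-(1:ℝ)/2) :=
          Real.rpow_le_rpow_of_nonpos hbpos hb (by norm_num)
      _ = K ^ (-(1:ℝ)/2) * (φ₀ - s) ^ (-(1:ℝ)/2) :=
          Real.mul_rpow hK.le (by linarith [hs.2])
  -- combine
  have hsub2 : Ioo 0 φ₀ ⊆ Ioc 0 δ ∪ (Icc δ m ∪ Ioo m φ₀) := by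
    intro s hs
    rcases le_or_gt s δ with h | h
    · exact Or.inl ⟨hs.1, h⟩
    · rcases le_or_gt s m with h2 | h2
      · exact Or.inr (Or.inl ⟨h.le, h2⟩)
      · exact Or.inr (Or.inr ⟨h2, hs.2⟩)
  exact (hA.union (hB.union hC)).mono_set hsub2

/- main -/
/-- (i) there is a first positive zero `φ₀` of `h` with `h > 0` on
`(0,φ₀)`; (ii) for any such `φ₀`, if `h` has derivative `h'(φ₀) < 0` at `φ₀`,
then `∫₀^{φ₀} h(s)^{-1/2} ds` is finite. -/
theorem first_integral_zero_and_integrability (p a γ ω : ℝ) (hp1 : -1 < p) (hp0 : p < 0)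
    (ha : 0 < a) (hγ : 0 < γ) (hω : 0 < ω) :
    (∃ φ₀ > (0:ℝ), hFun p a γ ω φ₀ = 0 ∧
      ∀ s : ℝ, 0 < s → s < φ₀ → 0 < hFun p a γ ω s) ∧
    (∀ φ₀ : ℝ, 0 < φ₀ → hFun p a γ ω φ₀ = 0 →
      (∀ s : ℝ, 0 < s → s < φ₀ → 0 < hFun p a γ ω s) →
      ∀ h' : ℝ, HasDerivAt (hFun p a γ ω) h' φ₀ → h' < 0 →
        IntegrableOn (fun s => (hFun p a γ ω s) ^ (-(1:ℝ)/2)) (Set.Ioo 0 φ₀)) :=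
  ⟨part_one p a γ ω hp1 hp0 ha hγ hω,
   fun φ₀ h0 hz hp h' hd hn => part_two p a γ ω hp1 hp0 ha hγ hω φ₀ h0 hz hp h' hd hn⟩
end
end

section
/- Let p ∈ ℝ, a ∈ ℝ, w ∈ ℝ, c ≥ 0, ε ≥ 0, and let φ, ψ : ℝ → ℝ be continuous and bounded with φ ≥ 0, and assume the function x ↦ (φ(x)+ε)^p is bounded (e.g. ε > 0, or p ≥ 0). Suppose U ∈ C²(ℝ, ℂ) with U, U' ∈ L²(ℝ) and U(x)U'(x) → 0 as |x| → ∞, v ∈ L²(ℝ, ℝ), and G : ℝ → ℂ is measurable with G·Ū integrable, such that pointwise on ℝ: iG + U'' = (w - c²/2)U + (a/2)(φ+ε)^p[(p+2)U + p e^{icx} Ū] + e^{i(c/2)x} φ v + ψ U. Then Re ∫_ℝ G Ū dx = (ap/2) Im ∫_ℝ (φ+ε)^p e^{icx} Ū² dx + Im ∫_ℝ e^{i(c/2)x} φ v Ū dx. -/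
open MeasureTheory Filter Complex

noncomputable section

/-- the L² energy identity for the Schrödinger part of the
linearized system: if `iG + U'' = (w - c²/2)U + (a/2)(φ+ε)^p[(p+2)U + p e^{icx}Ū]
+ e^{i(c/2)x}φv + ψU` pointwise, then
`Re ∫ GŪ = (ap/2) Im ∫ (φ+ε)^p e^{icx} Ū² + Im ∫ e^{i(c/2)x} φ v Ū`. -/
theorem schrodinger_energy_identity (p a w c ε : ℝ) (hc : 0 ≤ c) (hε : 0 ≤ ε)
    (φ ψ : ℝ → ℝ) (hφc : Continuous φ) (hψc : Continuous ψ)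
    (hφb : ∃ M, ∀ x, |φ x| ≤ M) (hψb : ∃ M, ∀ x, |ψ x| ≤ M)
    (hφpos : ∀ x, 0 ≤ φ x)
    (hpow : ∃ M, ∀ x, (φ x + ε) ^ p ≤ M)
    (U : ℝ → ℂ) (hU : ContDiff ℝ 2 U) (hU2 : MemLp U 2) (hU'2 : MemLp (deriv U) 2)
    (hdecay : Tendsto (fun x => U x * deriv U x) (cocompact ℝ) (nhds 0))
    (v : ℝ → ℝ) (hv : MemLp v 2)
    (G : ℝ → ℂ) (hG : Measurable G)
    (hGU : Integrable (fun x => G x * (starRingEnd ℂ) (U x)))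
    (heq : ∀ x : ℝ,
      Complex.I * G x + deriv (deriv U) x
        = ((w : ℂ) - (c : ℂ) ^ 2 / 2) * U x
          + ((a : ℂ) / 2) * Complex.ofReal ((φ x + ε) ^ p)
            * (((p : ℂ) + 2) * U x
               + (p : ℂ) * Complex.exp (Complex.I * (c : ℂ) * (x : ℂ))
                 * (starRingEnd ℂ) (U x))
          + Complex.exp (Complex.I * ((c : ℂ) / 2) * (x : ℂ)) * (φ x : ℂ) * (v x : ℂ)
          + (ψ x : ℂ) * U x) :
    (∫ x : ℝ, G x * (starRingEnd ℂ) (U x)).re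
      = (a * p / 2) * (∫ x : ℝ, Complex.ofReal ((φ x + ε) ^ p)
            * Complex.exp (Complex.I * (c : ℂ) * (x : ℂ))
            * ((starRingEnd ℂ) (U x)) ^ 2).im
        + (∫ x : ℝ, Complex.exp (Complex.I * ((c : ℂ) / 2) * (x : ℂ))
            * (φ x : ℂ) * (v x : ℂ) * (starRingEnd ℂ) (U x)).im := by
  obtain ⟨Mφ, hMφ⟩ := hφb
  obtain ⟨Mψ, hMψ⟩ := hψb
  obtain ⟨Mp, hMp⟩ := hpow
  set q : ℝ → ℝ := fun x => (φ x + ε) ^ p with hq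
  have hq0 : ∀ x, 0 ≤ q x := fun x => Real.rpow_nonneg (add_nonneg (hφpos x) hε) p
  have hqb : ∀ x, |q x| ≤ max Mp 0 := fun x => by
    rw [_root_.abs_of_nonneg (hq0 x)]; exact le_max_of_le_left (hMp x)
  have hqm : Measurable q := (hφc.measurable.add_const ε).pow_const p
  -- smoothness facts
  have hUc : Continuous U := hU.continuous
  have hUd : Differentiable ℝ U := hU.differentiable (by norm_num)
  have hU1 : ContDiff ℝ 1 (deriv U) := by
    have := (contDiff_succ_iff_deriv (n := 1)).mp (by exact_mod_cast hU)
    exact this.2.2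
  have hU'c : Continuous (deriv U) := hU1.continuous
  have hU'd : Differentiable ℝ (deriv U) := hU1.differentiable (by norm_num)
  have hU''c : Continuous (deriv (deriv U)) := hU1.continuous_deriv le_rfl
  -- |U|² integrable
  have hUsq : Integrable (fun x => ‖U x‖ ^ 2) :=
    (memLp_two_iff_integrable_sq_norm hU2.aestronglyMeasurable).mp hU2
  have hU'sq : Integrable (fun x => ‖deriv U x‖ ^ 2) :=
    (memLp_two_iff_integrable_sq_norm hU'2.aestronglyMeasurable).mp hU'2
  have hnormSq : ∀ z : ℂ, Complex.normSq z = ‖z‖ ^ 2 := fun z => by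
    rw [Complex.sq_norm]
  have hnsq : Integrable (fun x => Complex.normSq (U x)) := by
    simpa only [hnormSq] using hUsq
  have hnsq' : Integrable (fun x => Complex.normSq (deriv U x)) := by
    simpa only [hnormSq] using hU'sq
  -- the three complex integrands
  set Cf : ℝ → ℂ := fun x => Complex.ofReal ((φ x + ε) ^ p)
      * Complex.exp (Complex.I * (c : ℂ) * (x : ℂ)) * ((starRingEnd ℂ) (U x)) ^ 2 with hCf
  set D : ℝ → ℂ := fun x => Complex.exp (Complex.I * ((c : ℂ) / 2) * (x : ℂ))
      * (φ x : ℂ) * (v x : ℂ) * (starRingEnd ℂ) (U x) with hD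
  set r : ℝ → ℝ := fun x =>
      (w - c ^ 2 / 2 + a / 2 * q x * (p + 2) + ψ x) * Complex.normSq (U x) with hr
  -- norms of exponentials
  have hexp1 : ∀ x : ℝ, ‖Complex.exp (Complex.I * (c : ℂ) * (x : ℂ))‖ = 1 := fun x => by
    rw [Complex.norm_exp]; simp
  have hexp2 : ∀ x : ℝ, ‖Complex.exp (Complex.I * ((c : ℂ) / 2) * (x : ℂ))‖ = 1 := fun x => by
    rw [Complex.norm_exp]; simp
  -- integrability of r
  have hrI : Integrable r := by
    apply Integrable.bdd_mul (c := |w - c ^ 2 / 2| + |a| / 2 * max Mp 0 * |p + 2| + Mψ) hnsq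
    · exact ((((measurable_const.sub measurable_const).add
        (((measurable_const.mul hqm).mul measurable_const))).add
        hψc.measurable)).aestronglyMeasurable
    · refine Eventually.of_forall fun x => ?_
      have h1 : |w - c ^ 2 / 2 + a / 2 * q x * (p + 2) + ψ x|
          ≤ |w - c ^ 2 / 2| + |a / 2 * q x * (p + 2)| + |ψ x| := by
        exact (abs_add_le _ _).trans (add_le_add_left (abs_add_le _ _) _)
      refine h1.trans ?_
      have h2 : |a / 2 * q x * (p + 2)| ≤ |a| / 2 * max Mp 0 * |p + 2| := by
        rw [abs_mul, abs_mul, abs_div, _root_.abs_two]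
        exact mul_le_mul_of_nonneg_right
          (mul_le_mul_of_nonneg_left (hqb x) (by positivity)) (abs_nonneg _)
      have h3 : |ψ x| ≤ Mψ := hMψ x
      linarith
  have hconjUm : Measurable fun x => (starRingEnd ℂ) (U x) :=
    (continuous_star.comp hUc).measurable
  have hnormconj : ∀ z : ℂ, ‖(starRingEnd ℂ) z‖ = ‖z‖ := fun z => by
    simp
  -- integrability of Cf
  have hCfI : Integrable Cf := by
    refine Integrable.mono' (hUsq.const_mul (max Mp 0)) ?_ (Eventually.of_forall fun x => ?_)
    · exact (((Complex.measurable_ofReal.comp hqm).mul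
        (Complex.continuous_exp.comp
          ((continuous_const.mul Complex.continuous_ofReal))).measurable).mul
        (hconjUm.pow_const 2)).aestronglyMeasurable
    · have : ‖Cf x‖ = q x * ‖U x‖ ^ 2 := by
        rw [hCf]
        simp only [norm_mul, norm_pow, hexp1, hnormconj, Complex.norm_real,
          Real.norm_eq_abs]
        rw [_root_.abs_of_nonneg (hq0 x)]; ring
      rw [this]
      have := hqb x; rw [_root_.abs_of_nonneg (hq0 x)] at this
      have h2 : (0:ℝ) ≤ ‖U x‖ ^ 2 := by positivity
      nlinarith
  -- integrability of |v|·|U| hence of D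
  have hvU : Integrable (fun x => ‖v x‖ * ‖U x‖) := by
    have hsm : MemLp ((fun x => ‖v x‖) • fun x => ‖U x‖) 1 :=
      MemLp.smul (𝕜 := ℝ) hU2.norm hv.norm
    exact memLp_one_iff_integrable.mp (by simpa [Pi.smul_apply, smul_eq_mul, Pi.mul_def] using hsm)
  have hDI : Integrable D := by
    refine Integrable.mono' (hvU.const_mul Mφ) ?_ (Eventually.of_forall fun x => ?_)
    · exact (((Complex.continuous_exp.comp
          (continuous_const.mul Complex.continuous_ofReal)).aestronglyMeasurable.mul
          (Complex.continuous_ofReal.comp hφc).aestronglyMeasurable).mul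
          (Complex.continuous_ofReal.comp_aestronglyMeasurable hv.1)).mul
          (continuous_star.comp hUc).aestronglyMeasurable
    · have : ‖D x‖ = φ x * (|v x| * ‖U x‖) := by
        rw [hD]
        simp only [norm_mul, hexp2, hnormconj, Complex.norm_real, Real.norm_eq_abs]
        rw [_root_.abs_of_nonneg (hφpos x)]; ring
      rw [this, Real.norm_eq_abs]
      have h1 : φ x ≤ Mφ := (le_abs_self _).trans (hMφ x)
      have h2 : (0:ℝ) ≤ |v x| * ‖U x‖ := by positivity
      nlinarith
  -- the RHS operator
  set H : ℝ → ℂ := fun x => ((w : ℂ) - (c : ℂ) ^ 2 / 2) * U x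
      + ((a : ℂ) / 2) * Complex.ofReal ((φ x + ε) ^ p)
        * (((p : ℂ) + 2) * U x + (p : ℂ) * Complex.exp (Complex.I * (c : ℂ) * (x : ℂ))
            * (starRingEnd ℂ) (U x))
      + Complex.exp (Complex.I * ((c : ℂ) / 2) * (x : ℂ)) * (φ x : ℂ) * (v x : ℂ)
      + (ψ x : ℂ) * U x with hH
  have hHU : ∀ x, H x * (starRingEnd ℂ) (U x)
      = ((r x : ℝ) : ℂ) + ((a * p / 2 : ℝ) : ℂ) * Cf x + D x := by
    intro x
    simp only [hH, hCf, hD, hr, hq]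
    have hm := Complex.mul_conj (U x)
    push_cast
    linear_combination ((w : ℂ) - (c : ℂ) ^ 2 / 2
      + (a : ℂ) / 2 * (((φ x + ε) ^ p : ℝ) : ℂ) * ((p : ℂ) + 2) + ((ψ x : ℝ) : ℂ)) * hm
  have hHUI : Integrable (fun x => H x * (starRingEnd ℂ) (U x)) := by
    have h0 : Integrable (fun x => ((r x : ℝ) : ℂ) + ((a * p / 2 : ℝ) : ℂ) * Cf x + D x) :=
      (hrI.ofReal.add (hCfI.const_mul _)).add hDI
    exact h0.congr (Eventually.of_forall fun x => (hHU x).symm)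
  have hU''U : ∀ x, deriv (deriv U) x * (starRingEnd ℂ) (U x)
      = H x * (starRingEnd ℂ) (U x) - Complex.I * (G x * (starRingEnd ℂ) (U x)) := by
    intro x
    have h := heq x
    simp only [hH]
    linear_combination (starRingEnd ℂ) (U x) * h
  have hU''UI : Integrable (fun x => deriv (deriv U) x * (starRingEnd ℂ) (U x)) := by
    have h0 : Integrable (fun x => H x * (starRingEnd ℂ) (U x)
        - Complex.I * (G x * (starRingEnd ℂ) (U x))) := hHUI.sub (hGU.const_mul _)
    exact h0.congr (Eventually.of_forall fun x => (hU''U x).symm)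
  -- integration by parts
  have hUU' : Integrable (fun x => deriv U x * (starRingEnd ℂ) (deriv U x)) :=
    hnsq'.ofReal.congr (Eventually.of_forall fun x => (Complex.mul_conj (deriv U x)).symm)
  have hderivF : ∀ x, HasDerivAt (fun y => deriv U y * (starRingEnd ℂ) (U y))
      (deriv (deriv U) x * (starRingEnd ℂ) (U x)
        + deriv U x * (starRingEnd ℂ) (deriv U x)) x := by
    intro x
    have h1 : HasDerivAt (deriv U) (deriv (deriv U) x) x := (hU'd x).hasDerivAt
    have h2 : HasDerivAt (fun y => (starRingEnd ℂ) (U y)) ((starRingEnd ℂ) (deriv U x)) x := by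
      simpa using ((hUd x).hasDerivAt).star
    exact h1.mul h2
  have hFtend : Tendsto (fun x => deriv U x * (starRingEnd ℂ) (U x)) (cocompact ℝ) (nhds 0) := by
    rw [tendsto_zero_iff_norm_tendsto_zero]
    have hd : Tendsto (fun x => ‖U x * deriv U x‖) (cocompact ℝ) (nhds 0) := by
      simpa using hdecay.norm
    refine hd.congr (fun x => ?_)
    simp only [norm_mul, hnormconj]; ring
  have hIBP : (∫ x, (deriv (deriv U) x * (starRingEnd ℂ) (U x)
      + deriv U x * (starRingEnd ℂ) (deriv U x))) = 0 - 0 :=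
    integral_of_hasDerivAt_of_tendsto hderivF (hU''UI.add hUU')
      (hFtend.mono_left atBot_le_cocompact) (hFtend.mono_left atTop_le_cocompact)
  have hintU'' : (∫ x, deriv (deriv U) x * (starRingEnd ℂ) (U x))
      = -(((∫ x, Complex.normSq (deriv U x)) : ℝ) : ℂ) := by
    rw [integral_add hU''UI hUU'] at hIBP
    have h1 : (∫ x, deriv U x * (starRingEnd ℂ) (deriv U x))
        = (((∫ x, Complex.normSq (deriv U x)) : ℝ) : ℂ) := by
      have h2 : (∫ x, deriv U x * (starRingEnd ℂ) (deriv U x))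
          = ∫ x, ((Complex.normSq (deriv U x) : ℝ) : ℂ) :=
        integral_congr_ae (Eventually.of_forall fun x => Complex.mul_conj (deriv U x))
      rw [h2]
      exact integral_ofReal
    rw [h1] at hIBP
    linear_combination hIBP
  have hGconj : ∀ x, G x * (starRingEnd ℂ) (U x)
      = -Complex.I * (H x * (starRingEnd ℂ) (U x)
          - deriv (deriv U) x * (starRingEnd ℂ) (U x)) := by
    intro x
    have h := heq x
    simp only [hH]
    linear_combination (-Complex.I * (starRingEnd ℂ) (U x)) * h
      + (G x * (starRingEnd ℂ) (U x)) * Complex.I_sq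
  have hint : (∫ x, G x * (starRingEnd ℂ) (U x))
      = -Complex.I * ((∫ x, H x * (starRingEnd ℂ) (U x))
          - ∫ x, deriv (deriv U) x * (starRingEnd ℂ) (U x)) := by
    rw [← integral_sub hHUI hU''UI, ← integral_const_mul]
    exact integral_congr_ae (Eventually.of_forall hGconj)
  have hrInt : (∫ x, ((r x : ℝ) : ℂ)) = (((∫ x, r x) : ℝ) : ℂ) := integral_ofReal
  have hintH : (∫ x, H x * (starRingEnd ℂ) (U x))
      = (((∫ x, r x) : ℝ) : ℂ) + ((a * p / 2 : ℝ) : ℂ) * (∫ x, Cf x) + ∫ x, D x := by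
    have h0 : (∫ x, H x * (starRingEnd ℂ) (U x))
        = ∫ x, (((r x : ℝ) : ℂ) + ((a * p / 2 : ℝ) : ℂ) * Cf x + D x) :=
      integral_congr_ae (Eventually.of_forall hHU)
    have hABI : Integrable (fun x => ((r x : ℝ) : ℂ) + ((a * p / 2 : ℝ) : ℂ) * Cf x) :=
      hrI.ofReal.add (hCfI.const_mul _)
    have hrIC : Integrable (fun x => ((r x : ℝ) : ℂ)) := hrI.ofReal
    rw [h0, integral_add hABI hDI, integral_add hrIC (hCfI.const_mul _),
      integral_const_mul, hrInt]
  rw [hint, hintH, hintU'']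
  set RR := ∫ x, r x
  set NN := ∫ x, Complex.normSq (deriv U x)
  set ZC := ∫ x, Cf x
  set ZD := ∫ x, D x
  simp only [Complex.mul_re, Complex.mul_im, Complex.add_im, Complex.sub_im, Complex.add_re,
    Complex.sub_re, Complex.ofReal_re, Complex.ofReal_im, Complex.I_re, Complex.I_im,
    Complex.neg_re, Complex.neg_im]
  ring
end
end
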